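/- Assume the block setup and QR setup. Then for each i ∈ {1,…,L}, the i-th column of X_j^{(G)} equals the i-th column of X_{j−1}^{(G)} if and only if the i-th column of C_j is the zero vector. Consequently, block GMRES partially stagnates at step j on a nonempty proper index set 𝕀 ⊊ {1,…,L} (meaning the columns of X_j^{(G)} indexed by 𝕀 agree with those of X_{j−1}^{(G)} while every column with index outside 𝕀 differs) if and only if C_j ≠ 0, the columns of C_j indexed by 𝕀 are zero, and the columns of C_j with indices outside 𝕀 are nonzero; in this case 0 < rank C_j ≤ L − |𝕀|. -/

import Mathlib

open Matrix

noncomputable section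

set_option maxHeartbeats 1000000

/-- Squared Frobenius norm of a complex matrix. -/
def frobSq {a b : Type*} [Fintype a] [Fintype b] (M : Matrix a b ℂ) : ℝ :=
  ∑ r, ∑ c, Complex.normSq (M r c)

/-- The four Moore–Penrose conditions. -/
def IsMoorePenrose {a b : Type*} [Fintype a] [Fintype b]
    (M : Matrix a b ℂ) (P : Matrix b a ℂ) : Prop :=
  M * P * M = M ∧ P * M * P = P ∧ (M * P)ᴴ = M * P ∧ (P * M)ᴴ = P * M

/-- The block Krylov subspace `𝕂_i(A, F)`: the span of all columns of
`F, A F, …, A^(i-1) F`. -/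
def blockKrylov {n L : ℕ} (A : Matrix (Fin n) (Fin n) ℂ)
    (F : Matrix (Fin n) (Fin L) ℂ) (i : ℕ) : Submodule ℂ (Fin n → ℂ) :=
  Submodule.span ℂ { v | ∃ k < i, ∃ c : Fin L, v = fun r => (A ^ k * F) r c }

/-- `E_L^{[mL]}` : the first `L` columns of the `mL × mL` identity matrix
(block row indexing). -/
def EL (m L : ℕ) : Matrix (Fin m × Fin L) (Fin L) ℂ :=
  Matrix.of fun r c => if (r.1 : ℕ) = 0 ∧ r.2 = c then 1 else 0

/-- An `L × L` matrix is upper triangular. -/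
def utL {L : ℕ} (M : Matrix (Fin L) (Fin L) ℂ) : Prop :=
  ∀ a b : Fin L, (b : ℕ) < (a : ℕ) → M a b = 0

/-- A block-indexed `mL × mL` matrix is upper triangular. -/
def utBig {m L : ℕ} (M : Matrix (Fin m × Fin L) (Fin m × Fin L) ℂ) : Prop :=
  ∀ r c : Fin m × Fin L, (c.1 : ℕ) * L + (c.2 : ℕ) < (r.1 : ℕ) * L + (r.2 : ℕ) → M r c = 0

/-- Stack a block-tall matrix on top of an extra block row. -/
def vcat {m L : ℕ} {col : Type*} (T : Matrix (Fin m × Fin L) col ℂ)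
    (Bo : Matrix (Fin L) col ℂ) : Matrix (Fin (m+1) × Fin L) col ℂ :=
  Matrix.of fun r cc => if h : (r.1 : ℕ) < m then T (⟨r.1, h⟩, r.2) cc else Bo r.2 cc

/-- The block matrix `[[R, Z], [0, N]]`. -/
def twoBlock {m L : ℕ} (R : Matrix (Fin m × Fin L) (Fin m × Fin L) ℂ)
    (Z : Matrix (Fin m × Fin L) (Fin L) ℂ) (N : Matrix (Fin L) (Fin L) ℂ) :
    Matrix (Fin (m+1) × Fin L) (Fin (m+1) × Fin L) ℂ :=
  Matrix.of fun r c =>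
    if hr : (r.1 : ℕ) < m then
      if hc : (c.1 : ℕ) < m then R (⟨r.1, hr⟩, r.2) (⟨c.1, hc⟩, c.2)
      else Z (⟨r.1, hr⟩, r.2) c.2
    else
      if (c.1 : ℕ) < m then 0 else N r.2 c.2

/-- The block matrix `[[R, Z], [0, Hmid], [0, Hbot]]`. -/
def threeBlock {m L : ℕ} (R : Matrix (Fin m × Fin L) (Fin m × Fin L) ℂ)
    (Z : Matrix (Fin m × Fin L) (Fin L) ℂ) (Hmid Hbot : Matrix (Fin L) (Fin L) ℂ) :
    Matrix (Fin (m+2) × Fin L) (Fin (m+1) × Fin L) ℂ :=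
  Matrix.of fun r c =>
    if hr : (r.1 : ℕ) < m then
      if hc : (c.1 : ℕ) < m then R (⟨r.1, hr⟩, r.2) (⟨c.1, hc⟩, c.2)
      else Z (⟨r.1, hr⟩, r.2) c.2
    else
      if (c.1 : ℕ) < m then 0
      else if (r.1 : ℕ) = m then Hmid r.2 c.2 else Hbot r.2 c.2

/-- `diag(Q, I_L)` : extend a block-indexed square matrix by an identity block. -/
def extendOne {m L : ℕ} (Q : Matrix (Fin m × Fin L) (Fin m × Fin L) ℂ) :
    Matrix (Fin (m+1) × Fin L) (Fin (m+1) × Fin L) ℂ :=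
  Matrix.of fun r c =>
    if hr : (r.1 : ℕ) < m then
      if hc : (c.1 : ℕ) < m then Q (⟨r.1, hr⟩, r.2) (⟨c.1, hc⟩, c.2) else 0
    else
      if (c.1 : ℕ) < m then 0 else if r.2 = c.2 then 1 else 0

/-- `diag(I_{mL}, Q)` : an identity block, then `Q` in the bottom right corner. -/
def extendBot {m L : ℕ} (Q : Matrix (Fin L) (Fin L) ℂ) :
    Matrix (Fin (m+1) × Fin L) (Fin (m+1) × Fin L) ℂ :=
  Matrix.of fun r c =>
    if (r.1 : ℕ) < m ∨ (c.1 : ℕ) < m then (if r = c then 1 else 0)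
    else Q r.2 c.2

/-- The `(m+2)L × (m+2)L` matrix which is the identity outside of its trailing
principal `2L × 2L` block, which is `[[Q11, Q12], [Q21, Q22]]`. -/
def trailingTwo {m L : ℕ} (Q11 Q12 Q21 Q22 : Matrix (Fin L) (Fin L) ℂ) :
    Matrix (Fin (m+2) × Fin L) (Fin (m+2) × Fin L) ℂ :=
  Matrix.of fun r c =>
    if (r.1 : ℕ) < m ∨ (c.1 : ℕ) < m then (if r = c then 1 else 0)
    else if (r.1 : ℕ) = m then
      (if (c.1 : ℕ) = m then Q11 r.2 c.2 else Q12 r.2 c.2)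
    else
      (if (c.1 : ℕ) = m then Q21 r.2 c.2 else Q22 r.2 c.2)

/-- The block matrix `[R ; 0]` (one extra zero block row below `R`). -/
def stackZero {m L : ℕ} (R : Matrix (Fin m × Fin L) (Fin m × Fin L) ℂ) :
    Matrix (Fin (m+1) × Fin L) (Fin m × Fin L) ℂ :=
  Matrix.of fun r c => if h : (r.1 : ℕ) < m then R (⟨r.1, h⟩, r.2) c else 0

/-- A breakdown-free block Arnoldi decomposition of length `j = p + 1` for the block
linear system `A X = B` with initial guess `X₀` (block size `L`). -/
structure BlockArnoldi (n L p : ℕ) : Type where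
  A : Matrix (Fin n) (Fin n) ℂ
  B : Matrix (Fin n) (Fin L) ℂ
  X0 : Matrix (Fin n) (Fin L) ℂ
  W : Matrix (Fin n) (Fin (p+2) × Fin L) ℂ
  S0 : Matrix (Fin L) (Fin L) ℂ
  Hbar : Matrix (Fin (p+2) × Fin L) (Fin (p+1) × Fin L) ℂ
  hL : 1 ≤ L
  hn : (p+2) * L ≤ n
  F0_rank : (B - A * X0).rank = L
  orth : Wᴴ * W = 1
  S0_ut : utL S0
  S0_inv : IsUnit S0
  F0_eq : B - A * X0 = (W.submatrix id fun c : Fin L => ((0 : Fin (p+2)), c)) * S0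
  span : ∀ i : ℕ, i ≤ p + 2 →
    blockKrylov A (B - A * X0) i =
      Submodule.span ℂ { v | ∃ c : Fin (p+2) × Fin L, (c.1 : ℕ) < i ∧ v = fun r => W r c }
  arnoldi : A * W.submatrix id (Prod.map Fin.castSucc id) = W * Hbar
  hess : ∀ r c, (c.1 : ℕ) + 1 < (r.1 : ℕ) → Hbar r c = 0
  sub_ut : ∀ (k : Fin (p+1)) (a b : Fin L), (b : ℕ) < (a : ℕ) → Hbar (k.succ, a) (k, b) = 0
  sub_inv : ∀ k : Fin (p+1), IsUnit (Matrix.of fun a b : Fin L => Hbar (k.succ, a) (k, b))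

namespace BlockArnoldi

variable {n L p : ℕ}

/-- `H̄_{j-1}`, the leading `jL × (j-1)L` submatrix of `H̄_j`. -/
def Hprev (D : BlockArnoldi n L p) : Matrix (Fin (p+1) × Fin L) (Fin p × Fin L) ℂ :=
  D.Hbar.submatrix (Prod.map Fin.castSucc id) (Prod.map Fin.castSucc id)

/-- `H_j`, the leading `jL × jL` submatrix of `H̄_j`. -/
def Hsq (D : BlockArnoldi n L p) : Matrix (Fin (p+1) × Fin L) (Fin (p+1) × Fin L) ℂ :=
  D.Hbar.submatrix (Prod.map Fin.castSucc id) id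

/-- `W_j = [V₁ … V_j]`. -/
def Wfull (D : BlockArnoldi n L p) : Matrix (Fin n) (Fin (p+1) × Fin L) ℂ :=
  D.W.submatrix id (Prod.map Fin.castSucc id)

/-- `W_{j-1} = [V₁ … V_{j-1}]`. -/
def Wprev (D : BlockArnoldi n L p) : Matrix (Fin n) (Fin p × Fin L) ℂ :=
  D.W.submatrix id (Prod.map (fun i : Fin p => (i.castSucc.castSucc : Fin (p+2))) id)

/-- `V_j`, the `j`-th block Arnoldi vector. -/
def Vj (D : BlockArnoldi n L p) : Matrix (Fin n) (Fin L) ℂ :=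
  D.W.submatrix id fun c : Fin L => (((Fin.last p).castSucc : Fin (p+2)), c)

end BlockArnoldi

/-- `Y` is the unique minimizer of `‖Hb • Y' - T‖_F` over all `Y'`. -/
def IsUniqueFrobMin {a b c : Type*} [Fintype a] [Fintype b] [Fintype c]
    (Hb : Matrix a b ℂ) (T : Matrix a c ℂ) (Y : Matrix b c ℂ) : Prop :=
  (∀ Y', frobSq (Hb * Y - T) ≤ frobSq (Hb * Y' - T)) ∧
  ∀ Y', (∀ Y'', frobSq (Hb * Y' - T) ≤ frobSq (Hb * Y'' - T)) → Y' = Y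

/-- `Y_j^{(G)}` is the solution of the `j`-th block GMRES least-squares subproblem. -/
def IsBlockGMRESj {n L p : ℕ} (D : BlockArnoldi n L p)
    (Y : Matrix (Fin (p+1) × Fin L) (Fin L) ℂ) : Prop :=
  IsUniqueFrobMin D.Hbar (EL (p+2) L * D.S0) Y

/-- `Y_{j-1}^{(G)}` is the solution of the `(j-1)`-st block GMRES least-squares
subproblem. -/
def IsBlockGMRESprev {n L p : ℕ} (D : BlockArnoldi n L p)
    (Y : Matrix (Fin p × Fin L) (Fin L) ℂ) : Prop :=
  IsUniqueFrobMin D.Hprev (EL (p+1) L * D.S0) Y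

/-- The QR setup at step `j = p+1` : a QR factorization `Q̄_{j-1} H̄_{j-1} = [R_{j-1}; 0]`
from the previous step, the induced splitting
`diag(Q̄_{j-1}, I_L)·H̄_j = [[R,Z],[0,Ĥ_{jj}],[0,H_{j+1,j}]]`, the unitary `Q_j`
(identity outside its trailing principal `2L×2L` block) completing the
QR factorization of `H̄_j`, and the unitary `Q̂_j^{(b)}` triangularizing `Ĥ_{jj}`. -/
structure QRSetup (L p : ℕ) (Hbar : Matrix (Fin (p+2) × Fin L) (Fin (p+1) × Fin L) ℂ)
    (S0 : Matrix (Fin L) (Fin L) ℂ) : Type where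
  Qbar : Matrix (Fin (p+1) × Fin L) (Fin (p+1) × Fin L) ℂ
  R : Matrix (Fin p × Fin L) (Fin p × Fin L) ℂ
  Z : Matrix (Fin p × Fin L) (Fin L) ℂ
  Hhat : Matrix (Fin L) (Fin L) ℂ
  Hsub : Matrix (Fin L) (Fin L) ℂ
  Q11 : Matrix (Fin L) (Fin L) ℂ
  Q12 : Matrix (Fin L) (Fin L) ℂ
  Q21 : Matrix (Fin L) (Fin L) ℂ
  Q22 : Matrix (Fin L) (Fin L) ℂ
  N : Matrix (Fin L) (Fin L) ℂ
  Qhatb : Matrix (Fin L) (Fin L) ℂ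
  Nhat : Matrix (Fin L) (Fin L) ℂ
  Qbar_unit : Qbarᴴ * Qbar = 1
  Qbar_base : p = 0 → Qbar = 1
  R_ut : utBig R
  R_inv : IsUnit R
  qr_prev : Qbar * Hbar.submatrix (Prod.map Fin.castSucc id) (Prod.map Fin.castSucc id)
      = stackZero R
  qr_split : extendOne Qbar * Hbar = threeBlock R Z Hhat Hsub
  Qj_unit : (trailingTwo (m := p) Q11 Q12 Q21 Q22)ᴴ * trailingTwo (m := p) Q11 Q12 Q21 Q22 = 1
  qr_full : trailingTwo (m := p) Q11 Q12 Q21 Q22 * (extendOne Qbar * Hbar)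
      = threeBlock R Z N 0
  N_ut : utL N
  N_inv : IsUnit N
  Qhatb_unit : Qhatbᴴ * Qhatb = 1
  Nhat_def : Nhat = Qhatb * Hhat
  Nhat_ut : utL Nhat

namespace QRSetup

variable {L p : ℕ} {Hbar : Matrix (Fin (p+2) × Fin L) (Fin (p+1) × Fin L) ℂ}
  {S0 : Matrix (Fin L) (Fin L) ℂ}

/-- `C̃_j` : the last `L` rows of `Q̄_{j-1} E_L^{[jL]} S₀`. -/
def Ct (S : QRSetup L p Hbar S0) : Matrix (Fin L) (Fin L) ℂ :=
  Matrix.of fun a b => (S.Qbar * (EL (p+1) L * S0)) ((Fin.last p), a) b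

/-- `C_j := Q_j^{(11)} C̃_j`. -/
def C (S : QRSetup L p Hbar S0) : Matrix (Fin L) (Fin L) ℂ := S.Q11 * S.Ct

/-- `Ĉ_j := Q̂_j^{(b)} C̃_j`. -/
def Chat (S : QRSetup L p Hbar S0) : Matrix (Fin L) (Fin L) ℂ := S.Qhatb * S.Ct

end QRSetup

set_option linter.unusedSectionVars false
section Helpers
variable {m L : ℕ} {col : Type*} [Fintype col]

lemma frobSq_nonneg {a b : Type*} [Fintype a] [Fintype b] (M : Matrix a b ℂ) : 0 ≤ frobSq M :=
  Finset.sum_nonneg fun _ _ => Finset.sum_nonneg fun _ _ => Complex.normSq_nonneg _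

lemma frobSq_eq_trace {a b : Type*} [Fintype a] [Fintype b] (M : Matrix a b ℂ) :
    frobSq M = (Matrix.trace (Mᴴ * M)).re := by
  simp only [Matrix.trace, Matrix.diag, Matrix.mul_apply, Matrix.conjTranspose_apply, frobSq]
  rw [Complex.re_sum]
  rw [Finset.sum_comm]
  congr 1; ext r; rw [Complex.re_sum]; congr 1; ext c
  simp [Complex.normSq_apply, Complex.mul_re, Complex.conj_re, Complex.conj_im, RCLike.star_def]

lemma frobSq_unitary {a b : Type*} [Fintype a] [Fintype b] [DecidableEq a]
    (Q : Matrix a a ℂ) (hQ : Qᴴ * Q = 1) (M : Matrix a b ℂ) :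
    frobSq (Q * M) = frobSq M := by
  rw [frobSq_eq_trace, frobSq_eq_trace, Matrix.conjTranspose_mul]
  rw [show Mᴴ * Qᴴ * (Q * M) = Mᴴ * (Qᴴ * Q) * M by
    rw [Matrix.mul_assoc, Matrix.mul_assoc, Matrix.mul_assoc]]
  rw [hQ, Matrix.mul_one]

/-- split a sum over `Fin (m+1) × Fin L`. -/
lemma sum_split {M : Type*} [AddCommMonoid M] (f : Fin (m+1) × Fin L → M) :
    ∑ k, f k = (∑ k1 : Fin m, ∑ k2, f (k1.castSucc, k2)) + ∑ k2, f (Fin.last m, k2) := by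
  rw [Fintype.sum_prod_type, Fin.sum_univ_castSucc]

/-- the top rows of a block-stacked matrix -/
def topRows (M : Matrix (Fin (m+1) × Fin L) col ℂ) : Matrix (Fin m × Fin L) col ℂ :=
  M.submatrix (Prod.map Fin.castSucc id) id

/-- the bottom block row -/
def botRows (M : Matrix (Fin (m+1) × Fin L) col ℂ) : Matrix (Fin L) col ℂ :=
  M.submatrix (fun a => (Fin.last m, a)) id

lemma frobSq_split (M : Matrix (Fin (m+1) × Fin L) col ℂ) :
    frobSq M = frobSq (topRows M) + frobSq (botRows M) := by
  unfold frobSq topRows botRows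
  rw [sum_split (fun r => ∑ c, Complex.normSq (M r c)), Fintype.sum_prod_type]
  rfl

lemma topRows_mul {κ : Type*} [Fintype κ] (A : Matrix (Fin (m+1) × Fin L) κ ℂ)
    (Y : Matrix κ col ℂ) : topRows (A * Y) = A.submatrix (Prod.map Fin.castSucc id) id * Y := rfl

lemma botRows_mul {κ : Type*} [Fintype κ] (A : Matrix (Fin (m+1) × Fin L) κ ℂ)
    (Y : Matrix κ col ℂ) : botRows (A * Y) = A.submatrix (fun a : Fin L => (Fin.last m, a)) id * Y := rfl

lemma topRows_sub (A B : Matrix (Fin (m+1) × Fin L) col ℂ) :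
    topRows (A - B) = topRows A - topRows B := rfl

lemma botRows_sub (A B : Matrix (Fin (m+1) × Fin L) col ℂ) :
    botRows (A - B) = botRows A - botRows B := rfl

lemma vcat_castSucc (T : Matrix (Fin m × Fin L) col ℂ) (Bo : Matrix (Fin L) col ℂ)
    (k1 : Fin m) (k2 : Fin L) (c : col) : vcat T Bo (k1.castSucc, k2) c = T (k1, k2) c := by
  simp [vcat, k1.isLt]

lemma vcat_last (T : Matrix (Fin m × Fin L) col ℂ) (Bo : Matrix (Fin L) col ℂ)
    (k2 : Fin L) (c : col) : vcat T Bo (Fin.last m, k2) c = Bo k2 c := by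
  simp [vcat]

lemma topRows_vcat (T : Matrix (Fin m × Fin L) col ℂ) (Bo : Matrix (Fin L) col ℂ) :
    topRows (vcat T Bo) = T := by
  ext ⟨k1, k2⟩ c; exact vcat_castSucc T Bo k1 k2 c

lemma botRows_vcat (T : Matrix (Fin m × Fin L) col ℂ) (Bo : Matrix (Fin L) col ℂ) :
    botRows (vcat T Bo) = Bo := by
  ext k2 c; exact vcat_last T Bo k2 c

lemma topRows_threeBlock (R : Matrix (Fin m × Fin L) (Fin m × Fin L) ℂ)
    (Z : Matrix (Fin m × Fin L) (Fin L) ℂ) (Hmid Hbot : Matrix (Fin L) (Fin L) ℂ) :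
    (threeBlock R Z Hmid Hbot).submatrix (Prod.map Fin.castSucc id) id = twoBlock R Z Hmid := by
  ext ⟨k1, k2⟩ ⟨c1, c2⟩
  rcases Nat.lt_or_ge (k1 : ℕ) m with h | h
  · simp [threeBlock, twoBlock, h]
  · have h1 : ¬ ((k1.castSucc : Fin (m+2)).1 : ℕ) < m := by simpa using Nat.not_lt.2 h
    have h2 : ((k1 : ℕ) = m) := Nat.le_antisymm (Nat.lt_succ_iff.1 k1.isLt) h
    simp [threeBlock, twoBlock, h1, h2, Nat.not_lt.2 h]

lemma botRows_threeBlock (R : Matrix (Fin m × Fin L) (Fin m × Fin L) ℂ)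
    (Z : Matrix (Fin m × Fin L) (Fin L) ℂ) (Hmid : Matrix (Fin L) (Fin L) ℂ) :
    (threeBlock R Z Hmid (0 : Matrix (Fin L) (Fin L) ℂ)).submatrix
      (fun a : Fin L => ((Fin.last (m+1)), a)) id = 0 := by
  ext a ⟨c1, c2⟩
  have h1 : ¬ (((Fin.last (m+1)) : Fin (m+2)).1 : ℕ) < m := by simp [Fin.last]
  have h2 : ¬ (((Fin.last (m+1)) : Fin (m+2)).1 : ℕ) = m := by simp [Fin.last]
  simp [threeBlock, h1, h2]

end Helpers

section Helpers2
set_option linter.unusedSectionVars false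
variable {p L : ℕ}

lemma EL_mul (m : ℕ) (T0 : Matrix (Fin L) (Fin L) ℂ) (r1 : Fin m) (r2 c : Fin L) :
    (EL m L * T0) (r1, r2) c = if (r1 : ℕ) = 0 then T0 r2 c else 0 := by
  by_cases h : (r1 : ℕ) = 0
  · simp [Matrix.mul_apply, EL, h, Finset.sum_ite_eq]
  · simp [Matrix.mul_apply, EL, h]

lemma extendOne_mulEL (Q : Matrix (Fin (p+1) × Fin L) (Fin (p+1) × Fin L) ℂ)
    (T0 : Matrix (Fin L) (Fin L) ℂ) :
    extendOne Q * (EL (p+2) L * T0) = vcat (Q * (EL (p+1) L * T0)) 0 := by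
  ext ⟨r1, r2⟩ c
  rcases Fin.eq_castSucc_or_eq_last r1 with ⟨r1', rfl⟩ | rfl
  · rw [vcat_castSucc, Matrix.mul_apply, sum_split
      (fun k : Fin (p+1+1) × Fin L => extendOne Q (r1'.castSucc, r2) k * (EL (p+2) L * T0) k c)]
    have e1 : ∀ (k1 : Fin (p+1)) (k2 : Fin L),
        extendOne Q (r1'.castSucc, r2) (k1.castSucc, k2) = Q (r1', r2) (k1, k2) := by
      intro k1 k2; simp [extendOne, r1'.isLt, k1.isLt, Fin.is_le r1', Fin.is_le k1]
    have e2 : ∀ k2 : Fin L, extendOne Q (r1'.castSucc, r2) (Fin.last (p+1), k2) = 0 := by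
      intro k2; simp [extendOne, r1'.isLt, Fin.last, not_lt.mpr (Fin.is_le r1')]
    simp only [e1, e2, zero_mul, Finset.sum_const_zero, add_zero]
    rw [Matrix.mul_apply, Fintype.sum_prod_type]
    refine Finset.sum_congr rfl fun k1 _ => Finset.sum_congr rfl fun k2 _ => ?_
    rw [EL_mul, EL_mul]
    simp
  · rw [vcat_last, Matrix.mul_apply, sum_split
      (fun k : Fin (p+1+1) × Fin L => extendOne Q (Fin.last (p+1), r2) k * (EL (p+2) L * T0) k c)]
    have e1 : ∀ (k1 : Fin (p+1)) (k2 : Fin L),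
        extendOne Q (Fin.last (p+1), r2) (k1.castSucc, k2) = 0 := by
      intro k1 k2; simp [extendOne, k1.isLt, Fin.last, not_lt.mpr (Fin.is_le k1)]
    have e2 : ∀ k2 : Fin L, (EL (p+2) L * T0) (Fin.last (p+1), k2) c = 0 := by
      intro k2; rw [EL_mul]; simp [Fin.last]
    simp [e1, e2]

lemma extendOne_unitary (Q : Matrix (Fin (p+1) × Fin L) (Fin (p+1) × Fin L) ℂ)
    (h : Qᴴ * Q = 1) : (extendOne Q)ᴴ * extendOne Q = 1 := by
  ext ⟨r1, r2⟩ ⟨c1, c2⟩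
  rw [Matrix.mul_apply, sum_split (fun k : Fin (p+1+1) × Fin L =>
    (extendOne Q)ᴴ (r1, r2) k * extendOne Q k (c1, c2))]
  simp only [Matrix.conjTranspose_apply]
  rcases Fin.eq_castSucc_or_eq_last r1 with ⟨r1', rfl⟩ | rfl <;>
    rcases Fin.eq_castSucc_or_eq_last c1 with ⟨c1', rfl⟩ | rfl
  · have e1 : ∀ (k1 : Fin (p+1)) (k2 : Fin L),
        extendOne Q (k1.castSucc, k2) (r1'.castSucc, r2) = Q (k1, k2) (r1', r2) := by
      intro k1 k2; simp [extendOne, r1'.isLt, k1.isLt, Fin.is_le r1', Fin.is_le k1]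
    have e1' : ∀ (k1 : Fin (p+1)) (k2 : Fin L),
        extendOne Q (k1.castSucc, k2) (c1'.castSucc, c2) = Q (k1, k2) (c1', c2) := by
      intro k1 k2; simp [extendOne, c1'.isLt, k1.isLt, Fin.is_le c1', Fin.is_le k1]
    have e2 : ∀ k2 : Fin L, extendOne Q (Fin.last (p+1), k2) (r1'.castSucc, r2) = 0 := by
      intro k2; simp [extendOne, r1'.isLt, Fin.last, not_lt.mpr (Fin.is_le r1')]
    simp only [e1, e1', e2, map_zero, zero_mul, Finset.sum_const_zero, add_zero]
    have := congrFun (congrFun h ((r1', r2))) ((c1', c2))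
    rw [Matrix.mul_apply, Fintype.sum_prod_type] at this
    simp only [Matrix.conjTranspose_apply] at this
    rw [this, Matrix.one_apply, Matrix.one_apply]
    by_cases hh : r1' = c1' ∧ r2 = c2
    · obtain ⟨rfl, rfl⟩ := hh; simp
    · have : ¬ ((r1', r2) = (c1', c2)) := by simpa [Prod.ext_iff] using hh
      have h2 : ¬ ((r1'.castSucc, r2) = (c1'.castSucc, c2)) := by
        simpa [Prod.ext_iff, Fin.castSucc_inj] using hh
      simp [this, h2]
  · have e1 : ∀ (k1 : Fin (p+1)) (k2 : Fin L),
        extendOne Q (k1.castSucc, k2) (Fin.last (p+1), c2) = 0 := by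
      intro k1 k2; simp [extendOne, k1.isLt, Fin.last, not_lt.mpr (Fin.is_le k1)]
    have e2 : ∀ k2 : Fin L, extendOne Q (Fin.last (p+1), k2) (r1'.castSucc, r2) = 0 := by
      intro k2; simp [extendOne, r1'.isLt, Fin.last, not_lt.mpr (Fin.is_le r1')]
    have : ¬ ((r1'.castSucc, r2) = (Fin.last (p+1), c2)) := by
      intro hc; exact absurd (congrArg (fun x => (x.1 : ℕ)) hc) (by simp [Fin.last]; omega)
    simp [e1, e2, Matrix.one_apply, this]
  · have e1 : ∀ (k1 : Fin (p+1)) (k2 : Fin L),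
        extendOne Q (k1.castSucc, k2) (Fin.last (p+1), r2) = 0 := by
      intro k1 k2; simp [extendOne, k1.isLt, Fin.last, not_lt.mpr (Fin.is_le k1)]
    have e2 : ∀ k2 : Fin L, extendOne Q (Fin.last (p+1), k2) (c1'.castSucc, c2) = 0 := by
      intro k2; simp [extendOne, c1'.isLt, Fin.last, not_lt.mpr (Fin.is_le c1')]
    have : ¬ ((Fin.last (p+1), r2) = (c1'.castSucc, c2)) := by
      intro hc; exact absurd (congrArg (fun x => (x.1 : ℕ)) hc) (by simp [Fin.last]; omega)
    simp [e1, e2, Matrix.one_apply, this]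
  · have e1 : ∀ (k1 : Fin (p+1)) (k2 : Fin L),
        extendOne Q (k1.castSucc, k2) (Fin.last (p+1), r2) = 0 := by
      intro k1 k2; simp [extendOne, k1.isLt, Fin.last, not_lt.mpr (Fin.is_le k1)]
    have e2 : ∀ k2 : Fin L, extendOne Q (Fin.last (p+1), k2) (Fin.last (p+1), r2)
        = if k2 = r2 then 1 else 0 := by
      intro k2; simp [extendOne, Fin.last]
    have e2' : ∀ k2 : Fin L, extendOne Q (Fin.last (p+1), k2) (Fin.last (p+1), c2)
        = if k2 = c2 then 1 else 0 := by
      intro k2; simp [extendOne, Fin.last]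
    have key : ∀ x : Fin L, star (if x = r2 then (1:ℂ) else 0) * (if x = c2 then 1 else 0)
        = if x = r2 then (if r2 = c2 then (1:ℂ) else 0) else 0 := by
      intro x; by_cases h1 : x = r2
      · subst h1; simp
      · simp [h1]
    simp only [e1, map_zero, zero_mul, Finset.sum_const_zero, zero_add, e2, e2', key,
      Finset.sum_ite_eq', Finset.mem_univ, if_true]
    rw [Matrix.one_apply]
    simp [Prod.ext_iff]

end Helpers2

section Helpers3
set_option linter.unusedSectionVars false
variable {p L : ℕ}

lemma trailing_mul_vcat (Q11 Q12 Q21 Q22 : Matrix (Fin L) (Fin L) ℂ)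
    (Gp : Matrix (Fin (p+1) × Fin L) (Fin L) ℂ) :
    trailingTwo (m := p) Q11 Q12 Q21 Q22 * vcat Gp (0 : Matrix (Fin L) (Fin L) ℂ)
      = vcat (vcat (topRows Gp) (Q11 * botRows Gp)) (Q21 * botRows Gp) := by
  ext ⟨r1, r2⟩ c
  rcases Fin.eq_castSucc_or_eq_last r1 with ⟨r1', rfl⟩ | rfl
  · rcases Fin.eq_castSucc_or_eq_last r1' with ⟨s, rfl⟩ | rfl
    · -- top rows: identity row
      have e : ∀ k : Fin (p+1+1) × Fin L, trailingTwo (m := p) Q11 Q12 Q21 Q22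
          ((s.castSucc.castSucc : Fin (p+2)), r2) k
          = if ((s.castSucc.castSucc : Fin (p+2)), r2) = k then 1 else 0 := by
        intro k
        have hs : ((s.castSucc.castSucc : Fin (p+2)).1 : ℕ) < p := by simp [s.isLt]
        simp [trailingTwo, hs]
      rw [Matrix.mul_apply]
      simp only [e, ite_mul, one_mul, zero_mul, Finset.sum_ite_eq, Finset.mem_univ, if_true]
      rw [vcat_castSucc, vcat_castSucc, vcat_castSucc]
      rfl
    · -- middle row block
      rw [Matrix.mul_apply, sum_split (fun k : Fin (p+1+1) × Fin L =>
        trailingTwo (m := p) Q11 Q12 Q21 Q22 (((Fin.last p).castSucc : Fin (p+2)), r2) k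
          * vcat Gp 0 k c), Fin.sum_univ_castSucc
          (f := fun k1 : Fin (p+1) => ∑ k2, trailingTwo (m := p) Q11 Q12 Q21 Q22
            (((Fin.last p).castSucc : Fin (p+2)), r2) (k1.castSucc, k2)
            * vcat Gp 0 (k1.castSucc, k2) c)]
      have e1 : ∀ (t : Fin p) (k2 : Fin L), trailingTwo (m := p) Q11 Q12 Q21 Q22
          (((Fin.last p).castSucc : Fin (p+2)), r2) ((t.castSucc.castSucc : Fin (p+2)), k2) = 0 := by
        intro t k2
        have hne : ¬ ((((Fin.last p).castSucc : Fin (p+2)), r2)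
            = ((t.castSucc.castSucc : Fin (p+2)), k2)) := by
          intro hc
          have := congrArg (fun x => (x.1 : ℕ)) hc
          simp [Fin.last] at this
          omega
        have ht : ((t.castSucc.castSucc : Fin (p+2)).1 : ℕ) < p := by simp [t.isLt]
        simp [trailingTwo, ht, hne]
      have e2 : ∀ k2 : Fin L, trailingTwo (m := p) Q11 Q12 Q21 Q22
          (((Fin.last p).castSucc : Fin (p+2)), r2) (((Fin.last p).castSucc : Fin (p+2)), k2)
          = Q11 r2 k2 := by
        intro k2; simp [trailingTwo, Fin.last]
      simp only [e1, zero_mul, Finset.sum_const_zero, Finset.sum_const_zero, zero_add, e2]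
      have e3 : ∀ k2 : Fin L, vcat Gp (0 : Matrix (Fin L) (Fin L) ℂ) (Fin.last (p+1), k2) c = 0 :=
        fun k2 => vcat_last _ _ _ _
      simp only [e3, mul_zero, Finset.sum_const_zero, add_zero]
      rw [vcat_castSucc, vcat_last, Matrix.mul_apply]
      congr 1; ext k2
      rw [vcat_castSucc]
      rfl
  · -- bottom row block
    rw [Matrix.mul_apply, sum_split (fun k : Fin (p+1+1) × Fin L =>
      trailingTwo (m := p) Q11 Q12 Q21 Q22 (Fin.last (p+1), r2) k
        * vcat Gp 0 k c), Fin.sum_univ_castSucc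
        (f := fun k1 : Fin (p+1) => ∑ k2, trailingTwo (m := p) Q11 Q12 Q21 Q22
          (Fin.last (p+1), r2) (k1.castSucc, k2)
          * vcat Gp 0 (k1.castSucc, k2) c)]
    have e1 : ∀ (t : Fin p) (k2 : Fin L), trailingTwo (m := p) Q11 Q12 Q21 Q22
        (Fin.last (p+1), r2) ((t.castSucc.castSucc : Fin (p+2)), k2) = 0 := by
      intro t k2
      have hne : ¬ (((Fin.last (p+1) : Fin (p+2)), r2)
          = ((t.castSucc.castSucc : Fin (p+2)), k2)) := by
        intro hc
        have := congrArg (fun x => (x.1 : ℕ)) hc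
        simp [Fin.last] at this
        omega
      have ht : ((t.castSucc.castSucc : Fin (p+2)).1 : ℕ) < p := by simp [t.isLt]
      simp [trailingTwo, ht, hne]
    have e2 : ∀ k2 : Fin L, trailingTwo (m := p) Q11 Q12 Q21 Q22
        (Fin.last (p+1), r2) (((Fin.last p).castSucc : Fin (p+2)), k2) = Q21 r2 k2 := by
      intro k2; simp [trailingTwo, Fin.last]
    simp only [e1, zero_mul, Finset.sum_const_zero, zero_add, e2]
    have e3 : ∀ k2 : Fin L, vcat Gp (0 : Matrix (Fin L) (Fin L) ℂ) (Fin.last (p+1), k2) c = 0 :=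
      fun k2 => vcat_last _ _ _ _
    simp only [e3, mul_zero, Finset.sum_const_zero, add_zero]
    rw [vcat_last, Matrix.mul_apply]
    congr 1; ext k2
    rw [vcat_castSucc]
    rfl

end Helpers3

section Helpers4
set_option linter.unusedSectionVars false
variable {m L : ℕ} {cb : Type*} [Fintype cb]

lemma frobSq_zero' {a b : Type*} [Fintype a] [Fintype b] : frobSq (0 : Matrix a b ℂ) = 0 := by
  simp [frobSq]

lemma frobSq_neg {a b : Type*} [Fintype a] [Fintype b] (M : Matrix a b ℂ) :
    frobSq (-M) = frobSq M := by simp [frobSq]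

lemma stackZero_eq_vcat (R : Matrix (Fin m × Fin L) (Fin m × Fin L) ℂ) :
    stackZero R = vcat R 0 := by
  ext ⟨r1, r2⟩ c
  by_cases h : (r1 : ℕ) < m <;> simp [stackZero, vcat, h]

lemma threeBlock_eq_vcat (R : Matrix (Fin m × Fin L) (Fin m × Fin L) ℂ)
    (Z : Matrix (Fin m × Fin L) (Fin L) ℂ) (N : Matrix (Fin L) (Fin L) ℂ) :
    threeBlock R Z N 0 = vcat (twoBlock R Z N) 0 := by
  ext ⟨r1, r2⟩ ⟨c1, c2⟩
  by_cases h1 : (r1 : ℕ) < m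
  · have h2 : (r1 : ℕ) < m + 1 := by omega
    simp [threeBlock, vcat, twoBlock, h1, h2]
    omega
  · by_cases h2 : (r1 : ℕ) < m + 1
    · have h3 : (r1 : ℕ) = m := by omega
      simp [threeBlock, vcat, twoBlock, h1, h2, h3]
    · have h3 : ¬ (r1 : ℕ) = m := by omega
      by_cases h4 : (c1 : ℕ) < m <;> simp [threeBlock, vcat, twoBlock, h1, h2, h3, h4] <;> omega

lemma twoBlock_mul_vcat (R : Matrix (Fin m × Fin L) (Fin m × Fin L) ℂ)
    (Z : Matrix (Fin m × Fin L) (Fin L) ℂ) (N : Matrix (Fin L) (Fin L) ℂ)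
    (Yt : Matrix (Fin m × Fin L) cb ℂ) (Yb : Matrix (Fin L) cb ℂ) :
    twoBlock R Z N * vcat Yt Yb = vcat (R * Yt + Z * Yb) (N * Yb) := by
  ext ⟨r1, r2⟩ c
  rw [Matrix.mul_apply, sum_split (fun k : Fin (m+1) × Fin L =>
    twoBlock R Z N (r1, r2) k * vcat Yt Yb k c)]
  rcases Fin.eq_castSucc_or_eq_last r1 with ⟨r1', rfl⟩ | rfl
  · have e1 : ∀ (k1 : Fin m) (k2 : Fin L),
        twoBlock R Z N (r1'.castSucc, r2) (k1.castSucc, k2) = R (r1', r2) (k1, k2) := by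
      intro k1 k2; simp [twoBlock, r1'.isLt, k1.isLt]
    have e2 : ∀ k2 : Fin L,
        twoBlock R Z N (r1'.castSucc, r2) (Fin.last m, k2) = Z (r1', r2) k2 := by
      intro k2; simp [twoBlock, r1'.isLt, Fin.last]
    simp only [e1, e2, vcat_castSucc, vcat_last]
    rw [Matrix.add_apply, Matrix.mul_apply, Matrix.mul_apply, Fintype.sum_prod_type]
  · have e1 : ∀ (k1 : Fin m) (k2 : Fin L),
        twoBlock R Z N (Fin.last m, r2) (k1.castSucc, k2) = 0 := by
      intro k1 k2; simp [twoBlock, k1.isLt, Fin.last]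
    have e2 : ∀ k2 : Fin L,
        twoBlock R Z N (Fin.last m, r2) (Fin.last m, k2) = N r2 k2 := by
      intro k2; simp [twoBlock, Fin.last]
    simp only [e1, e2, vcat_last, zero_mul, Finset.sum_const_zero, Finset.sum_const_zero,
      zero_add, vcat_last]
    rw [Matrix.mul_apply]

lemma ls_split (H : Matrix (Fin (m+1) × Fin L) cb ℂ) (T : Matrix (Fin (m+1) × Fin L) (Fin L) ℂ)
    (Q : Matrix (Fin (m+1) × Fin L) (Fin (m+1) × Fin L) ℂ) (hu : Qᴴ * Q = 1)
    (B : Matrix (Fin m × Fin L) cb ℂ) (hQH : Q * H = vcat B 0) (Y : Matrix cb (Fin L) ℂ) :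
    frobSq (H * Y - T) = frobSq (B * Y - topRows (Q * T)) + frobSq (botRows (Q * T)) := by
  have key : Q * (H * Y - T) = vcat B 0 * Y - Q * T := by
    rw [Matrix.mul_sub, ← Matrix.mul_assoc, hQH]
  rw [← frobSq_unitary Q hu, key, frobSq_split]
  congr 1
  · rw [topRows_sub, topRows_mul]
    rw [show (vcat B 0).submatrix (Prod.map Fin.castSucc id) id = B from topRows_vcat B 0]
  · rw [botRows_sub, botRows_mul]
    rw [show (vcat B 0).submatrix (fun a : Fin L => (Fin.last m, a)) id
        = (0 : Matrix (Fin L) cb ℂ) from botRows_vcat B 0]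
    rw [Matrix.zero_mul, zero_sub, frobSq_neg]

lemma min_of_solve (H : Matrix (Fin (m+1) × Fin L) cb ℂ)
    (T : Matrix (Fin (m+1) × Fin L) (Fin L) ℂ) (G : Matrix (Fin m × Fin L) (Fin L) ℂ)
    (B : Matrix (Fin m × Fin L) cb ℂ) (cst : ℝ)
    (hchar : ∀ Y : Matrix cb (Fin L) ℂ, frobSq (H * Y - T) = frobSq (B * Y - G) + cst)
    (Ys : Matrix cb (Fin L) ℂ) (hY : B * Ys = G) :
    ∀ Y' : Matrix cb (Fin L) ℂ, frobSq (H * Ys - T) ≤ frobSq (H * Y' - T) := by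
  intro Y'
  rw [hchar, hchar, hY, sub_self, frobSq_zero']
  have := frobSq_nonneg (B * Y' - G)
  linarith

lemma rank_pos_of_ne_zero {k l : ℕ} (M : Matrix (Fin k) (Fin l) ℂ) (h : M ≠ 0) :
    0 < M.rank := by
  rcases Nat.eq_zero_or_pos M.rank with h0 | h0
  · exfalso
    apply h
    have : LinearMap.range M.mulVecLin = ⊥ := by
      rw [Matrix.rank] at h0
      exact Submodule.finrank_eq_zero.mp h0
    ext a b
    have hv : M.mulVecLin (Pi.single b 1) = 0 := by
      have hmem := LinearMap.mem_range_self M.mulVecLin (Pi.single b 1)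
      rw [this, Submodule.mem_bot] at hmem
      exact hmem
    have := congrFun hv a
    rw [Matrix.mulVecLin_apply, Matrix.mulVec_single] at this
    simpa using this
  · exact h0

lemma rank_le_of_zero_cols {k l : ℕ} (M : Matrix (Fin k) (Fin l) ℂ) (I : Finset (Fin l))
    (h : ∀ i ∈ I, ∀ a, M a i = 0) : M.rank ≤ l - I.card := by
  classical
  set d : Fin l → ℂ := fun i => if i ∈ I then 0 else 1 with hd
  have hM : M = M * Matrix.diagonal d := by
    ext a i
    rw [Matrix.mul_diagonal]
    by_cases hi : i ∈ I
    · rw [h i hi a]; simp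
    · simp [hd, hi]
  calc M.rank = (M * Matrix.diagonal d).rank := by rw [← hM]
    _ ≤ (Matrix.diagonal d).rank := Matrix.rank_mul_le_right _ _
    _ = Fintype.card {i // d i ≠ 0} := Matrix.rank_diagonal d
    _ = Fintype.card {i // i ∉ I} := by
        apply Fintype.card_congr
        apply Equiv.subtypeEquivRight
        intro i
        by_cases hi : i ∈ I <;> simp [hd, hi]
    _ = l - I.card := by
        rw [Fintype.card_subtype_compl, Fintype.card_fin]
        congr 1
        exact Fintype.card_coe I  -- card {i // i ∈ I} = I.card

end Helpers4

section Helpers5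
set_option linter.unusedSectionVars false

lemma mul_pad {n' m L : ℕ} {cb : Type*} [Fintype cb]
    (W : Matrix (Fin n') (Fin (m+1) × Fin L) ℂ) (Y : Matrix (Fin m × Fin L) cb ℂ) :
    W.submatrix id (Prod.map Fin.castSucc id) * Y = W * vcat Y 0 := by
  ext r c
  rw [Matrix.mul_apply, Matrix.mul_apply, sum_split
    (fun k : Fin (m+1) × Fin L => W r k * vcat Y 0 k c)]
  simp only [vcat_castSucc, vcat_last, Matrix.zero_apply, mul_zero,
    Finset.sum_const_zero, add_zero]
  rw [Fintype.sum_prod_type]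
  rfl

end Helpers5


/-- For each `i`, the `i`-th column of `X_j^(G)` equals the `i`-th
column of `X_{j-1}^(G)` iff the `i`-th column of `C_j` is zero.  Consequently, block
GMRES partially stagnates at step `j` on a nonempty proper index set `𝕀` iff
`C_j ≠ 0`, the columns of `C_j` indexed by `𝕀` vanish and those outside `𝕀` do not;
in this case `0 < rank C_j ≤ L - |𝕀|`. -/
theorem stmt15 {n L p : ℕ} (D : BlockArnoldi n L p) (S : QRSetup L p D.Hbar D.S0)
    (Yj : Matrix (Fin (p+1) × Fin L) (Fin L) ℂ) (hYj : IsBlockGMRESj D Yj)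
    (Yprev : Matrix (Fin p × Fin L) (Fin L) ℂ) (hYprev : IsBlockGMRESprev D Yprev) :
    ∀ Xj : Matrix (Fin n) (Fin L) ℂ, Xj = D.X0 + D.Wfull * Yj →
    ∀ Xp : Matrix (Fin n) (Fin L) ℂ, Xp = D.X0 + D.Wprev * Yprev →
    (∀ i : Fin L, (∀ rr, Xj rr i = Xp rr i) ↔ (∀ a : Fin L, S.C a i = 0)) ∧
    (∀ I : Finset (Fin L), I.Nonempty → I ≠ Finset.univ →
      (((∀ i ∈ I, ∀ rr, Xj rr i = Xp rr i) ∧ (∀ i ∉ I, ∃ rr, Xj rr i ≠ Xp rr i)) ↔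
        (S.C ≠ 0 ∧ (∀ i ∈ I, ∀ a : Fin L, S.C a i = 0) ∧
          (∀ i ∉ I, ∃ a : Fin L, S.C a i ≠ 0))) ∧
      (((∀ i ∈ I, ∀ rr, Xj rr i = Xp rr i) ∧ (∀ i ∉ I, ∃ rr, Xj rr i ≠ Xp rr i)) →
        0 < S.C.rank ∧ S.C.rank ≤ L - I.card)) := by
  intro Xj hXj Xp hXp
  classical
  have hRdet : IsUnit S.R.det := (Matrix.isUnit_iff_isUnit_det _).mp S.R_inv
  have hNdet : IsUnit S.N.det := (Matrix.isUnit_iff_isUnit_det _).mp S.N_inv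
  set Gp : Matrix (Fin (p+1) × Fin L) (Fin L) ℂ := S.Qbar * (EL (p+1) L * D.S0) with hGpdef
  -- characterization of the previous least-squares problem
  have hchar_prev : ∀ Y : Matrix (Fin p × Fin L) (Fin L) ℂ, frobSq (D.Hprev * Y - EL (p+1) L * D.S0)
      = frobSq (S.R * Y - topRows Gp) + frobSq (botRows Gp) := by
    intro Y
    exact ls_split D.Hprev (EL (p+1) L * D.S0) S.Qbar S.Qbar_unit S.R
      (by rw [show S.Qbar * D.Hprev = stackZero S.R from S.qr_prev, stackZero_eq_vcat]) Y
  have hYprev_sol : S.R * Yprev = topRows Gp := by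
    have hmin := min_of_solve D.Hprev (EL (p+1) L * D.S0) (topRows Gp) S.R
      (frobSq (botRows Gp)) hchar_prev (S.R⁻¹ * topRows Gp)
      (by rw [← Matrix.mul_assoc, Matrix.mul_nonsing_inv _ hRdet, Matrix.one_mul])
    have heq := hYprev.2 _ hmin
    rw [← heq, ← Matrix.mul_assoc, Matrix.mul_nonsing_inv _ hRdet, Matrix.one_mul]
  -- the full QR transform
  set Qf := trailingTwo (m := p) S.Q11 S.Q12 S.Q21 S.Q22 * extendOne S.Qbar with hQfdef
  have hQfu : Qfᴴ * Qf = 1 := by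
    rw [hQfdef, Matrix.conjTranspose_mul, Matrix.mul_assoc, ← Matrix.mul_assoc
      (trailingTwo (m := p) S.Q11 S.Q12 S.Q21 S.Q22)ᴴ, S.Qj_unit, Matrix.one_mul,
      extendOne_unitary _ S.Qbar_unit]
  have hQfH : Qf * D.Hbar = vcat (twoBlock S.R S.Z S.N) 0 := by
    rw [hQfdef, Matrix.mul_assoc, S.qr_full, threeBlock_eq_vcat]
  have hQfT : Qf * (EL (p+2) L * D.S0)
      = vcat (vcat (topRows Gp) S.C) (S.Q21 * botRows Gp) := by
    rw [hQfdef, Matrix.mul_assoc, extendOne_mulEL, trailing_mul_vcat]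
    rfl
  have hchar_j : ∀ Y : Matrix (Fin (p+1) × Fin L) (Fin L) ℂ, frobSq (D.Hbar * Y - EL (p+2) L * D.S0)
      = frobSq (twoBlock S.R S.Z S.N * Y - vcat (topRows Gp) S.C)
        + frobSq (botRows (Qf * (EL (p+2) L * D.S0))) := by
    intro Y
    have := ls_split D.Hbar (EL (p+2) L * D.S0) Qf hQfu (twoBlock S.R S.Z S.N) hQfH Y
    rw [this]
    congr 2
    rw [hQfT, topRows_vcat]
  -- candidate solution for step j
  set Ybot := S.N⁻¹ * S.C with hYbotdef
  set Ytop := Yprev - S.R⁻¹ * (S.Z * Ybot) with hYtopdef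
  have hNYbot : S.N * Ybot = S.C := by
    rw [hYbotdef, ← Matrix.mul_assoc, Matrix.mul_nonsing_inv _ hNdet, Matrix.one_mul]
  have hsolve : twoBlock S.R S.Z S.N * vcat Ytop Ybot = vcat (topRows Gp) S.C := by
    rw [twoBlock_mul_vcat, hNYbot]
    congr 1
    rw [hYtopdef, Matrix.mul_sub, ← Matrix.mul_assoc S.R, Matrix.mul_nonsing_inv _ hRdet,
      Matrix.one_mul, sub_add_cancel, hYprev_sol]
  have hYj_eq : Yj = vcat Ytop Ybot := by
    have hmin := min_of_solve D.Hbar (EL (p+2) L * D.S0) (vcat (topRows Gp) S.C)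
      (twoBlock S.R S.Z S.N) (frobSq (botRows (Qf * (EL (p+2) L * D.S0)))) hchar_j
      (vcat Ytop Ybot) hsolve
    exact (hYj.2 _ hmin).symm
  -- the difference of the iterates
  set ΔY := vcat Yj (0 : Matrix (Fin L) (Fin L) ℂ)
    - vcat (vcat Yprev (0 : Matrix (Fin L) (Fin L) ℂ)) (0 : Matrix (Fin L) (Fin L) ℂ) with hΔdef
  have hW : Xj - Xp = D.W * ΔY := by
    have h1 : D.Wfull * Yj = D.W * vcat Yj 0 := mul_pad D.W Yj
    have h2 : D.Wprev * Yprev = D.W * vcat (vcat Yprev 0) 0 := by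
      calc D.Wprev * Yprev = D.Wfull * vcat Yprev 0 := mul_pad D.Wfull Yprev
        _ = D.W * vcat (vcat Yprev 0) 0 := mul_pad D.W (vcat Yprev 0)
    rw [hXj, hXp, add_sub_add_left_eq_sub, h1, h2, ← Matrix.mul_sub]
  -- per-column characterization
  have hcol : ∀ i : Fin L, (∀ rr, Xj rr i = Xp rr i) ↔ (∀ a : Fin L, S.C a i = 0) := by
    intro i
    have hdiff : (∀ rr, Xj rr i = Xp rr i) ↔ ∀ k, ΔY k i = 0 := by
      constructor
      · intro h k
        have hz : ∀ rr, (D.W * ΔY) rr i = 0 := by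
          intro rr
          have hh := congrFun (congrFun hW rr) i
          rw [Matrix.sub_apply, h rr, sub_self] at hh
          exact hh.symm
        have hΔid : ΔY = D.Wᴴ * (D.W * ΔY) := by
          rw [← Matrix.mul_assoc, D.orth, Matrix.one_mul]
        calc ΔY k i = (D.Wᴴ * (D.W * ΔY)) k i := by rw [← hΔid]
          _ = ∑ rr, D.Wᴴ k rr * (D.W * ΔY) rr i := Matrix.mul_apply
          _ = 0 := Finset.sum_eq_zero fun rr _ => by rw [hz rr, mul_zero]
      · intro h rr
        have hh : (Xj - Xp) rr i = 0 := by
          rw [hW, Matrix.mul_apply]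
          exact Finset.sum_eq_zero fun k _ => by rw [h k, mul_zero]
        rw [Matrix.sub_apply] at hh
        exact sub_eq_zero.mp hh
    rw [hdiff]
    constructor
    · intro h a
      have hb : ∀ b, Ybot b i = 0 := by
        intro b
        have hh := h ((Fin.last p).castSucc, b)
        simp only [hΔdef, Matrix.sub_apply, vcat_castSucc, hYj_eq, vcat_last,
          Matrix.zero_apply, sub_zero] at hh
        exact hh
      rw [← hNYbot, Matrix.mul_apply]
      exact Finset.sum_eq_zero fun b _ => by rw [hb b, mul_zero]
    · intro h k
      have hbz : ∀ b, Ybot b i = 0 := by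
        intro b
        rw [hYbotdef, Matrix.mul_apply]
        exact Finset.sum_eq_zero fun x _ => by rw [h x, mul_zero]
      have hZb : ∀ x, (S.Z * Ybot) x i = 0 := fun x => by
        rw [Matrix.mul_apply]
        exact Finset.sum_eq_zero fun b _ => by rw [hbz b, mul_zero]
      have hRZb : ∀ x, (S.R⁻¹ * (S.Z * Ybot)) x i = 0 := fun x => by
        rw [Matrix.mul_apply]
        exact Finset.sum_eq_zero fun b _ => by rw [hZb b, mul_zero]
      obtain ⟨k1, a⟩ := k
      rw [hΔdef, Matrix.sub_apply]
      rcases Fin.eq_castSucc_or_eq_last k1 with ⟨k1', rfl⟩ | rfl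
      · rcases Fin.eq_castSucc_or_eq_last k1' with ⟨s, rfl⟩ | rfl
        · simp only [vcat_castSucc, hYj_eq, hYtopdef, Matrix.sub_apply]
          rw [hRZb (s, a)]
          ring
        · simp only [vcat_castSucc, hYj_eq, vcat_last, Matrix.zero_apply, sub_zero]
          exact hbz a
      · simp only [vcat_last, Matrix.zero_apply, sub_zero]
  refine ⟨hcol, fun I hne hprop => ?_⟩
  have hex : ∃ i, i ∉ I := by
    by_contra hc
    push_neg at hc
    exact hprop (Finset.eq_univ_iff_forall.mpr hc)
  constructor
  · constructor
    · rintro ⟨h1, h2⟩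
      obtain ⟨i0, hi0⟩ := hex
      have hC0 : ∃ a, S.C a i0 ≠ 0 := by
        by_contra hc
        push_neg at hc
        obtain ⟨rr, hrr⟩ := h2 i0 hi0
        exact hrr ((hcol i0).mpr hc rr)
      refine ⟨?_, fun i hi => (hcol i).mp (h1 i hi), fun i hi => ?_⟩
      · obtain ⟨a, ha⟩ := hC0
        intro hz
        rw [hz] at ha
        exact ha rfl
      · by_contra hc
        push_neg at hc
        obtain ⟨rr, hrr⟩ := h2 i hi
        exact hrr ((hcol i).mpr hc rr)
    · rintro ⟨hC, h1, h2⟩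
      refine ⟨fun i hi => (hcol i).mpr (h1 i hi), fun i hi => ?_⟩
      obtain ⟨a, ha⟩ := h2 i hi
      by_contra hc
      push_neg at hc
      exact ha (((hcol i).mp hc) a)
  · rintro ⟨h1, h2⟩
    have hcols0 : ∀ i ∈ I, ∀ a, S.C a i = 0 := fun i hi => (hcol i).mp (h1 i hi)
    have hCne : S.C ≠ 0 := by
      obtain ⟨i0, hi0⟩ := hex
      obtain ⟨rr, hrr⟩ := h2 i0 hi0
      intro hz
      exact hrr ((hcol i0).mpr (fun a => by rw [hz]; rfl) rr)
    exact ⟨rank_pos_of_ne_zero _ hCne, rank_le_of_zero_cols _ I hcols0⟩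

end
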